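/- Let F be a field, q ∈ F, and m, s, t ≥ 1 natural numbers, with q ≠ 0, q + 1 ≠ 0 and Δ := q²(s−1)(t−1) − 1 ≠ 0 in F. Let D̂ be a symmetric m×m matrix over F with D̂(w_m, w_m) = 0 (w_m the last index of Fin m), let x̂ : Fin m → F and λ_H ∈ F satisfy: (i) D̂·x̂ = λ_H·𝟙 (every entry of D̂·x̂ equals λ_H); (ii) ∑_{j} (1 + q + (q² − 1)·D̂(w_m, j))·x̂(j) = q + 1; (iii) ∑_{j} (1 + (q − 1)·D̂(w_m, j))·x̂(j) = 1. Index I = Fin m ⊕ (Fin (s−1) ⊕ Fin t), fix w₀ : Fin t, and define the I×I matrix D by: D(inl i, inl j) = D̂(i,j); D(inl i, inr(inl b)) = D(inr(inl b), inl i) = (q+1) + q²·D̂(i, w_m); D(inl i, inr(inr c)) = D(inr(inr c), inl i) = 1 + q·D̂(i, w_m); D(inr(inl a), inr(inl b)) = q+1 if a ≠ b and 0 if a = b; D(inr(inl a), inr(inr c)) = D(inr(inr c), inr(inl a)) = 1; D(inr(inr c), inr(inr c')) = q+1 if c ≠ c' and 0 if c = c'. Define x : I → F by x(inl i) = x̂(i)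 for i ≠ w_m, x(inl w_m) = x̂(w_m) + (q(t−1)−1)/((q+1)Δ) − 1, x(inr (inl a)) = (q(t−1)−1)/((q+1)Δ), x(inr (inr c)) = (q(s−1)−1)/((q+1)Δ). Then D·x = (λ_H + λ_{s,t})·𝟙, where λ_{s,t} = ((q+1)²(s−1)(t−1) − st)/((q+1)Δ). -/

import Mathlib

/-- The `q`-distance matrix of the graph obtained from a graph `H` with
`m` vertices (with `q`-distance matrix `D̂` and cut vertex `w_m`, playing the
role of an `X`-vertex of the new block) by attaching a leaf block `K_{s,t}`:
the index set is `Fin m ⊕ (Fin s' ⊕ Fin t')` where `Fin s'` indexes the new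
`X`-vertices other than the cut vertex and `Fin t'` the new `Y`-vertices. -/
def extDMat (F : Type*) [Field F] (q : F) {m s' t' : ℕ}
    (Dh : Matrix (Fin m) (Fin m) F) (wm : Fin m) :
    Matrix (Fin m ⊕ (Fin s' ⊕ Fin t')) (Fin m ⊕ (Fin s' ⊕ Fin t')) F :=
  Matrix.of fun u v =>
    match u, v with
    | Sum.inl i, Sum.inl j => Dh i j
    | Sum.inl i, Sum.inr (Sum.inl _) => (q + 1) + q ^ 2 * Dh i wm
    | Sum.inr (Sum.inl _), Sum.inl i => (q + 1) + q ^ 2 * Dh i wm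
    | Sum.inl i, Sum.inr (Sum.inr _) => 1 + q * Dh i wm
    | Sum.inr (Sum.inr _), Sum.inl i => 1 + q * Dh i wm
    | Sum.inr (Sum.inl a), Sum.inr (Sum.inl b) => if a = b then 0 else q + 1
    | Sum.inr (Sum.inl _), Sum.inr (Sum.inr _) => 1
    | Sum.inr (Sum.inr _), Sum.inr (Sum.inl _) => 1
    | Sum.inr (Sum.inr c), Sum.inr (Sum.inr c') => if c = c' then 0 else q + 1

/-- The extension of the special vector `x̂` of `H` to the enlarged graph. -/
def extXVec (F : Type*) [Field F] (q : F) (s t : ℕ) {m s' t' : ℕ}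
    (xh : Fin m → F) (wm : Fin m) : Fin m ⊕ (Fin s' ⊕ Fin t') → F := fun u =>
  match u with
  | Sum.inl i =>
      if i = wm then
        xh wm + (q * ((t : F) - 1) - 1) /
          ((q + 1) * (q ^ 2 * ((s : F) - 1) * ((t : F) - 1) - 1)) - 1
      else xh i
  | Sum.inr (Sum.inl _) =>
      (q * ((t : F) - 1) - 1) /
        ((q + 1) * (q ^ 2 * ((s : F) - 1) * ((t : F) - 1) - 1))
  | Sum.inr (Sum.inr _) =>
      (q * ((s : F) - 1) - 1) /
        ((q + 1) * (q ^ 2 * ((s : F) - 1) * ((t : F) - 1) - 1))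

private lemma extKey1 {F : Type*} [Field F] (q S T D : F) (hq : q + 1 ≠ 0)
    (hΔ : q ^ 2 * S * T - 1 ≠ 0) :
    D * ((q * T - 1) / ((q + 1) * (q ^ 2 * S * T - 1)) - 1) +
      S * ((q + 1 + q ^ 2 * D) * ((q * T - 1) / ((q + 1) * (q ^ 2 * S * T - 1)))) +
      (T + 1) * ((1 + q * D) * ((q * S - 1) / ((q + 1) * (q ^ 2 * S * T - 1)))) =
    ((q + 1) ^ 2 * S * T - (S + 1) * (T + 1)) / ((q + 1) * (q ^ 2 * S * T - 1)) := by
  have hx := div_mul_cancel₀ (q * T - 1) (mul_ne_zero hq hΔ)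
  have hy := div_mul_cancel₀ (q * S - 1) (mul_ne_zero hq hΔ)
  rw [eq_div_iff (mul_ne_zero hq hΔ)]
  linear_combination (D + S * (q + 1 + q ^ 2 * D)) * hx + ((T + 1) * (1 + q * D)) * hy

private lemma extKey2 {F : Type*} [Field F] (q S T : F) (hq : q + 1 ≠ 0)
    (hΔ : q ^ 2 * S * T - 1 ≠ 0) :
    (q + 1) + (q + 1) * ((q * T - 1) / ((q + 1) * (q ^ 2 * S * T - 1)) - 1) +
      (S * ((q + 1) * ((q * T - 1) / ((q + 1) * (q ^ 2 * S * T - 1)))) -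
        (q + 1) * ((q * T - 1) / ((q + 1) * (q ^ 2 * S * T - 1)))) +
      (T + 1) * ((q * S - 1) / ((q + 1) * (q ^ 2 * S * T - 1))) =
    ((q + 1) ^ 2 * S * T - (S + 1) * (T + 1)) / ((q + 1) * (q ^ 2 * S * T - 1)) := by
  field_simp
  ring

private lemma extKey3 {F : Type*} [Field F] (q S T : F) (hq : q + 1 ≠ 0)
    (hΔ : q ^ 2 * S * T - 1 ≠ 0) :
    1 + ((q * T - 1) / ((q + 1) * (q ^ 2 * S * T - 1)) - 1) +
      S * ((q * T - 1) / ((q + 1) * (q ^ 2 * S * T - 1))) +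
      ((T + 1) * ((q + 1) * ((q * S - 1) / ((q + 1) * (q ^ 2 * S * T - 1)))) -
        (q + 1) * ((q * S - 1) / ((q + 1) * (q ^ 2 * S * T - 1)))) =
    ((q + 1) ^ 2 * S * T - (S + 1) * (T + 1)) / ((q + 1) * (q ^ 2 * S * T - 1)) := by
  field_simp
  ring

theorem extDMat_mulVec_extXVec (F : Type*) [Field F] (q : F)
    (m s t : ℕ) (hm : 1 ≤ m) (hs : 1 ≤ s) (ht : 1 ≤ t)
    (hq0 : q ≠ 0) (hq : q + 1 ≠ 0)
    (hΔ : q ^ 2 * ((s : F) - 1) * ((t : F) - 1) - 1 ≠ 0)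
    (Dh : Matrix (Fin m) (Fin m) F) (hsymm : Dh.IsSymm)
    (wm : Fin m) (hwm : (wm : ℕ) = m - 1) (hdiag : Dh wm wm = 0)
    (xh : Fin m → F) (lamH : F)
    (hDx : ∀ i, Dh.mulVec xh i = lamH)
    (hsum1 : ∑ j, (1 + q + (q ^ 2 - 1) * Dh wm j) * xh j = q + 1)
    (hsum2 : ∑ j, (1 + (q - 1) * Dh wm j) * xh j = 1) :
    ∀ u : Fin m ⊕ (Fin (s - 1) ⊕ Fin t),
      (extDMat F q Dh wm (s' := s - 1) (t' := t)).mulVec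
          (extXVec F q s t xh wm) u
        = lamH + ((q + 1) ^ 2 * ((s : F) - 1) * ((t : F) - 1) - (s : F) * (t : F)) /
            ((q + 1) * (q ^ 2 * ((s : F) - 1) * ((t : F) - 1) - 1)) := by
  classical
  intro u
  have hA0 : ((q + 1) * (q ^ 2 * ((s : F) - 1) * ((t : F) - 1) - 1)) ≠ 0 :=
    mul_ne_zero hq hΔ
  have hcast : ((s - 1 : ℕ) : F) = (s : F) - 1 := by
    push_cast [Nat.cast_sub hs]; ring
  have h1 : ∑ j, Dh wm j * xh j = lamH := by
    have := hDx wm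
    simpa [Matrix.mulVec, dotProduct] using this
  have hA : ∑ j, ((q + 1) + q ^ 2 * Dh wm j) * xh j = (q + 1) + lamH := by
    have hpt : ∀ j : Fin m, ((q + 1) + q ^ 2 * Dh wm j) * xh j
        = (1 + q + (q ^ 2 - 1) * Dh wm j) * xh j + Dh wm j * xh j := by
      intro j; ring
    rw [Finset.sum_congr rfl fun j _ => hpt j, Finset.sum_add_distrib, hsum1, h1]
  have hB : ∑ j, (1 + q * Dh wm j) * xh j = 1 + lamH := by
    have hpt : ∀ j : Fin m, (1 + q * Dh wm j) * xh j
        = (1 + (q - 1) * Dh wm j) * xh j + Dh wm j * xh j := by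
      intro j; ring
    rw [Finset.sum_congr rfl fun j _ => hpt j, Finset.sum_add_distrib, hsum2, h1]
  set α : F := (q * ((t : F) - 1) - 1) /
      ((q + 1) * (q ^ 2 * ((s : F) - 1) * ((t : F) - 1) - 1)) with hα
  set β : F := (q * ((s : F) - 1) - 1) /
      ((q + 1) * (q ^ 2 * ((s : F) - 1) * ((t : F) - 1) - 1)) with hβ
  rcases u with i | a | c
  · -- row indexed by an old vertex
    simp only [Matrix.mulVec, dotProduct, Fintype.sum_sum_type,
      extDMat, extXVec, Matrix.of_apply]
    have hpt : ∀ j : Fin m,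
        Dh i j * (if j = wm then xh wm + α - 1 else xh j)
          = Dh i j * xh j + (if j = wm then Dh i wm * (α - 1) else 0) := by
      intro j
      by_cases h : j = wm
      · subst h; simp; ring
      · simp [h]
    rw [Finset.sum_congr rfl fun j _ => hpt j, Finset.sum_add_distrib]
    have h2 : ∑ j, Dh i j * xh j = lamH := by
      have := hDx i
      simpa [Matrix.mulVec, dotProduct] using this
    rw [h2]
    simp only [Finset.sum_ite_eq', Finset.mem_univ, if_pos, Finset.sum_const,
      Finset.card_univ, Fintype.card_fin, nsmul_eq_mul, hcast]
    linear_combination extKey1 q ((s:F)-1) ((t:F)-1) (Dh i wm) hq hΔ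
  · -- row indexed by a new X-vertex
    simp only [Matrix.mulVec, dotProduct, Fintype.sum_sum_type,
      extDMat, extXVec, Matrix.of_apply]
    have hpt : ∀ j : Fin m,
        ((q + 1) + q ^ 2 * Dh j wm) * (if j = wm then xh wm + α - 1 else xh j)
          = ((q + 1) + q ^ 2 * Dh wm j) * xh j
            + (if j = wm then (q + 1) * (α - 1) else 0) := by
      intro j
      rw [hsymm.apply wm j]
      by_cases h : j = wm
      · subst h; simp [hdiag]; ring
      · simp [h]
    rw [Finset.sum_congr rfl fun j _ => hpt j, Finset.sum_add_distrib, hA]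
    have hpt2 : ∀ b : Fin (s - 1),
        (if a = b then (0 : F) else q + 1) * α
          = (q + 1) * α - (if a = b then (q + 1) * α else 0) := by
      intro b; by_cases h : a = b <;> simp [h]
    rw [Finset.sum_congr rfl fun b _ => hpt2 b, Finset.sum_sub_distrib,
      Finset.sum_ite_eq]
    simp only [Finset.sum_ite_eq', Finset.mem_univ, if_pos, Finset.sum_const,
      Finset.card_univ, Fintype.card_fin, nsmul_eq_mul, hcast, one_mul]
    linear_combination extKey2 q ((s:F)-1) ((t:F)-1) hq hΔ
  · -- row indexed by a new Y-vertex
    simp only [Matrix.mulVec, dotProduct, Fintype.sum_sum_type,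
      extDMat, extXVec, Matrix.of_apply]
    have hpt : ∀ j : Fin m,
        (1 + q * Dh j wm) * (if j = wm then xh wm + α - 1 else xh j)
          = (1 + q * Dh wm j) * xh j + (if j = wm then α - 1 else 0) := by
      intro j
      rw [hsymm.apply wm j]
      by_cases h : j = wm
      · subst h; simp [hdiag]; ring
      · simp [h]
    rw [Finset.sum_congr rfl fun j _ => hpt j, Finset.sum_add_distrib, hB]
    have hpt2 : ∀ c' : Fin t,
        (if c = c' then (0 : F) else q + 1) * β
          = (q + 1) * β - (if c = c' then (q + 1) * β else 0) := by
      intro c'; by_cases h : c = c' <;> simp [h]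
    rw [Finset.sum_congr rfl fun c' _ => hpt2 c', Finset.sum_sub_distrib,
      Finset.sum_ite_eq]
    simp only [Finset.sum_ite_eq', Finset.mem_univ, if_pos, Finset.sum_const,
      Finset.card_univ, Fintype.card_fin, nsmul_eq_mul, hcast, one_mul]
    linear_combination extKey3 q ((s:F)-1) ((t:F)-1) hq hΔ
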